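/- Multi-window polarization condition: let g^1,...,g^J, γ^1,...,γ^J ∈ C^N satisfy Σ_{j=1}^J ( |ĝ^j(0) + γ̂^j(0)|² − N μ² ‖ĝ^j − γ̂^j‖_2² ) > 0, where μ = max_{ℓ,n} |χ_ℓ(n)|. Then Σ_{j=1}^J ⟨T_i g^j, T_i γ^j⟩ ≠ 0 for every vertex i. -/

import Mathlib

open Finset

noncomputable def gft {N : ℕ} (χ : Fin N → Fin N → ℂ) (f : Fin N → ℂ) (ℓ : Fin N) : ℂ :=
  ∑ i, f i * starRingEnd ℂ (χ ℓ i)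

noncomputable def gtrans {N : ℕ} (χ : Fin N → Fin N → ℂ) (n : Fin N) (f : Fin N → ℂ)
    (i : Fin N) : ℂ :=
  ((Real.sqrt N : ℝ) : ℂ) * ∑ ℓ, gft χ f ℓ * starRingEnd ℂ (χ ℓ n) * χ ℓ i

noncomputable def ip {N : ℕ} (f g : Fin N → ℂ) : ℂ :=
  ∑ i, f i * starRingEnd ℂ (g i)

noncomputable def nrm {N : ℕ} (f : Fin N → ℂ) : ℝ :=
  Real.sqrt (∑ i, ‖(f i)‖ ^ 2)

def IsONB {N : ℕ} (χ : Fin N → Fin N → ℂ) : Prop :=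
  ∀ ℓ ℓ' : Fin N, (∑ i, χ ℓ i * starRingEnd ℂ (χ ℓ' i)) = if ℓ = ℓ' then 1 else 0

noncomputable def atom {N : ℕ} (χ : Fin N → Fin N → ℂ) (g : Fin N → ℂ) (n k i : Fin N) : ℂ :=
  (N : ℂ) * χ k i * ∑ ℓ, gft χ g ℓ * starRingEnd ℂ (χ ℓ n) * χ ℓ i

lemma ip_gtrans {N : ℕ} (χ : Fin N → Fin N → ℂ) (hχ : IsONB χ) (n : Fin N) (f h : Fin N → ℂ) :
    ip (gtrans χ n f) (gtrans χ n h) =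
      (N : ℂ) * ∑ ℓ, gft χ f ℓ * starRingEnd ℂ (gft χ h ℓ) * (χ ℓ n * starRingEnd ℂ (χ ℓ n)) := by
  have hc : ((Real.sqrt N : ℝ) : ℂ) * ((Real.sqrt N : ℝ) : ℂ) = (N : ℂ) := by
    norm_cast
    exact Real.mul_self_sqrt (Nat.cast_nonneg N)
  unfold ip gtrans
  have step : ∀ i : Fin N,
      (((Real.sqrt N : ℝ) : ℂ) * ∑ ℓ, gft χ f ℓ * starRingEnd ℂ (χ ℓ n) * χ ℓ i) *
        starRingEnd ℂ (((Real.sqrt N : ℝ) : ℂ) * ∑ ℓ, gft χ h ℓ * starRingEnd ℂ (χ ℓ n) * χ ℓ i) =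
      (N : ℂ) * ∑ ℓ, ∑ ℓ', (gft χ f ℓ * starRingEnd ℂ (χ ℓ n) *
        (starRingEnd ℂ (gft χ h ℓ') * χ ℓ' n)) * (χ ℓ i * starRingEnd ℂ (χ ℓ' i)) := by
    intro i
    rw [map_mul, map_sum, Complex.conj_ofReal, mul_mul_mul_comm, hc, Finset.sum_mul_sum]
    congr 1
    refine Finset.sum_congr rfl fun ℓ _ => Finset.sum_congr rfl fun ℓ' _ => ?_
    simp only [map_mul, Complex.conj_conj]
    ring
  have hχ' : ∀ ℓ ℓ' : Fin N, (∑ i, χ ℓ i * starRingEnd ℂ (χ ℓ' i)) = if ℓ = ℓ' then 1 else 0 := hχ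
  rw [Finset.sum_congr rfl fun i _ => step i, ← Finset.mul_sum]
  congr 1
  rw [Finset.sum_comm]
  refine Finset.sum_congr rfl fun ℓ _ => ?_
  rw [Finset.sum_comm]
  simp only [← Finset.mul_sum, hχ', mul_ite, mul_one, mul_zero]
  rw [Finset.sum_ite_eq Finset.univ ℓ]
  simp only [Finset.mem_univ, if_true]
  ring

lemma polar (a b : ℂ) : 4 * (a * starRingEnd ℂ b).re =
    ‖(a + b)‖ ^ 2 - ‖(a - b)‖ ^ 2 := by
  rw [Complex.sq_norm, Complex.sq_norm, Complex.normSq_add, Complex.normSq_sub]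
  ring

lemma re_ip {N : ℕ} (χ : Fin N → Fin N → ℂ) (hχ : IsONB χ) (n : Fin N) (f h : Fin N → ℂ) :
    (ip (gtrans χ n f) (gtrans χ n h)).re =
      (N : ℝ) * ∑ ℓ, Complex.normSq (χ ℓ n) * (gft χ f ℓ * starRingEnd ℂ (gft χ h ℓ)).re := by
  rw [ip_gtrans χ hχ n f h]
  simp only [Complex.mul_conj]
  have : ∀ ℓ : Fin N, (gft χ f ℓ * starRingEnd ℂ (gft χ h ℓ) * (Complex.normSq (χ ℓ n) : ℂ)).re
      = Complex.normSq (χ ℓ n) * (gft χ f ℓ * starRingEnd ℂ (gft χ h ℓ)).re := by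
    intro ℓ
    rw [mul_comm, Complex.re_ofReal_mul]
  rw [show ((N : ℕ) : ℂ) = (((N : ℝ)) : ℂ) from by norm_cast, Complex.re_ofReal_mul]
  congr 1
  rw [Complex.re_sum]
  exact Finset.sum_congr rfl fun ℓ _ => this ℓ


lemma bound_aux {N : ℕ} (hNR : (0:ℝ) < N) (μ : ℝ) (r A B x : Fin N → ℝ) (z0 : Fin N)
    (hr0 : (N : ℝ) * r z0 = 1) (hrnn : ∀ ℓ, 0 ≤ r ℓ) (hrle : ∀ ℓ, r ℓ ≤ μ ^ 2)
    (hAnn : ∀ ℓ, 0 ≤ A ℓ) (hBnn : ∀ ℓ, 0 ≤ B ℓ)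
    (hx : ∀ ℓ, 4 * x ℓ = A ℓ - B ℓ) :
    A z0 - (N : ℝ) * μ ^ 2 * ∑ ℓ, B ℓ ≤ 4 * ((N : ℝ) * ∑ ℓ, r ℓ * x ℓ) := by
  have e : 4 * ((N : ℝ) * ∑ ℓ, r ℓ * x ℓ) =
      (N : ℝ) * ∑ ℓ, r ℓ * A ℓ - (N : ℝ) * ∑ ℓ, r ℓ * B ℓ := by
    simp only [Finset.mul_sum]
    rw [← Finset.sum_sub_distrib]
    refine Finset.sum_congr rfl fun ℓ _ => ?_
    linear_combination (N : ℝ) * r ℓ * hx ℓ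
  have h1 : A z0 ≤ (N : ℝ) * ∑ ℓ, r ℓ * A ℓ := by
    have hsingle : r z0 * A z0 ≤ ∑ ℓ, r ℓ * A ℓ :=
      Finset.single_le_sum (f := fun ℓ => r ℓ * A ℓ)
        (fun ℓ _ => mul_nonneg (hrnn ℓ) (hAnn ℓ)) (Finset.mem_univ z0)
    calc A z0 = (N : ℝ) * (r z0 * A z0) := by rw [← mul_assoc, hr0, one_mul]
      _ ≤ (N : ℝ) * ∑ ℓ, r ℓ * A ℓ := mul_le_mul_of_nonneg_left hsingle (le_of_lt hNR)
  have h2 : (N : ℝ) * ∑ ℓ, r ℓ * B ℓ ≤ (N : ℝ) * μ ^ 2 * ∑ ℓ, B ℓ := by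
    rw [mul_assoc]
    refine mul_le_mul_of_nonneg_left ?_ (le_of_lt hNR)
    rw [Finset.mul_sum]
    exact Finset.sum_le_sum fun ℓ _ => mul_le_mul_of_nonneg_right (hrle ℓ) (hBnn ℓ)
  linarith


theorem stmt18 {N J : ℕ} (hN : 0 < N) (χ : Fin N → Fin N → ℂ) (hχ : IsONB χ)
    (hconst : ∀ i j, χ ⟨0, hN⟩ i = χ ⟨0, hN⟩ j)
    (hmod : ∀ i, ‖(χ (⟨0, hN⟩ : Fin N) i)‖ = 1 / Real.sqrt N)
    (μ : ℝ)
    (hμ : IsGreatest {x : ℝ | ∃ ℓ n : Fin N, x = ‖(χ ℓ n)‖} μ)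
    (g γ : Fin J → Fin N → ℂ)
    (hcond : 0 < ∑ j, (‖(gft χ (g j) ⟨0, hN⟩ + gft χ (γ j) ⟨0, hN⟩)‖ ^ 2 -
      (N : ℝ) * μ ^ 2 * ∑ ℓ, ‖(gft χ (g j) ℓ - gft χ (γ j) ℓ)‖ ^ 2)) :
    ∀ i : Fin N, (∑ j, ip (gtrans χ i (g j)) (gtrans χ i (γ j))) ≠ 0 := by
  intro i hzero
  set z0 : Fin N := ⟨0, hN⟩ with hz0
  have hNR : (0 : ℝ) < (N : ℝ) := by exact_mod_cast hN
  have hr0 : (N : ℝ) * Complex.normSq (χ z0 i) = 1 := by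
    rw [← Complex.sq_norm, hmod i, div_pow, one_pow, Real.sq_sqrt (le_of_lt hNR)]
    field_simp
  have hrle : ∀ ℓ : Fin N, Complex.normSq (χ ℓ i) ≤ μ ^ 2 := by
    intro ℓ
    rw [← Complex.sq_norm]
    exact pow_le_pow_left₀ (norm_nonneg _) (hμ.2 ⟨ℓ, i, rfl⟩) 2
  have hre : ∀ j, ‖(gft χ (g j) z0 + gft χ (γ j) z0)‖ ^ 2 -
      (N : ℝ) * μ ^ 2 * ∑ ℓ, ‖(gft χ (g j) ℓ - gft χ (γ j) ℓ)‖ ^ 2 ≤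
      4 * (ip (gtrans χ i (g j)) (gtrans χ i (γ j))).re := by
    intro j
    rw [re_ip χ hχ i]
    exact bound_aux hNR μ (fun ℓ => Complex.normSq (χ ℓ i))
      (fun ℓ => ‖(gft χ (g j) ℓ + gft χ (γ j) ℓ)‖ ^ 2)
      (fun ℓ => ‖(gft χ (g j) ℓ - gft χ (γ j) ℓ)‖ ^ 2)
      (fun ℓ => (gft χ (g j) ℓ * starRingEnd ℂ (gft χ (γ j) ℓ)).re) z0 hr0
      (fun ℓ => Complex.normSq_nonneg _) hrle (fun ℓ => sq_nonneg _) (fun ℓ => sq_nonneg _)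
      (fun ℓ => polar (gft χ (g j) ℓ) (gft χ (γ j) ℓ))
  have hsum : ∑ j, (‖(gft χ (g j) z0 + gft χ (γ j) z0)‖ ^ 2 -
      (N : ℝ) * μ ^ 2 * ∑ ℓ, ‖(gft χ (g j) ℓ - gft χ (γ j) ℓ)‖ ^ 2) ≤
      ∑ j, 4 * (ip (gtrans χ i (g j)) (gtrans χ i (γ j))).re :=
    Finset.sum_le_sum fun j _ => hre j
  have hre0 : (∑ j, ip (gtrans χ i (g j)) (gtrans χ i (γ j))).re = 0 := by
    rw [hzero]; simp
  rw [Complex.re_sum] at hre0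
  have hzero4 : ∑ j, 4 * (ip (gtrans χ i (g j)) (gtrans χ i (γ j))).re = 0 := by
    rw [← Finset.mul_sum, hre0, mul_zero]
  linarith
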